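/- The determinant of the 20×20 integer matrix G (the Gram matrix of intersection numbers of the 20 chosen lines on the Fermat quartic surface, given explicitly) equals -64. -/

import Mathlib

noncomputable section

def G : Matrix (Fin 20) (Fin 20) ℤ :=
  Matrix.of ![
    ![-2, 1, 1, 1, 1, 0, 0, 1, 0, 0, 1, 0, 0, 0, 1, 0, 0, 0, 0, 1],
    ![1, -2, 1, 1, 0, 1, 0, 0, 1, 0, 0, 1, 0, 0, 0, 1, 0, 0, 1, 0],
    ![1, 1, -2, 1, 0, 0, 1, 0, 0, 1, 0, 0, 1, 0, 0, 0, 0, 1, 0, 0],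
    ![1, 1, 1, -2, 0, 0, 0, 0, 0, 0, 0, 0, 0, 1, 0, 0, 1, 0, 0, 0],
    ![1, 0, 0, 0, -2, 1, 1, 1, 0, 0, 0, 0, 0, 1, 0, 0, 0, 0, 1, 0],
    ![0, 1, 0, 0, 1, -2, 1, 0, 1, 0, 1, 0, 0, 0, 1, 0, 0, 1, 0, 0],
    ![0, 0, 1, 0, 1, 1, -2, 0, 0, 1, 0, 1, 0, 0, 0, 1, 1, 0, 0, 0],
    ![1, 0, 0, 0, 1, 0, 0, -2, 1, 1, 0, 0, 1, 0, 0, 0, 0, 1, 0, 0],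
    ![0, 1, 0, 0, 0, 1, 0, 1, -2, 1, 0, 0, 0, 1, 0, 0, 1, 0, 0, 0],
    ![0, 0, 1, 0, 0, 0, 1, 1, 1, -2, 1, 0, 0, 0, 1, 0, 0, 0, 0, 1],
    ![1, 0, 0, 0, 0, 1, 0, 0, 0, 1, -2, 1, 1, 1, 0, 0, 1, 0, 0, 0],
    ![0, 1, 0, 0, 0, 0, 1, 0, 0, 0, 1, -2, 1, 0, 1, 0, 0, 1, 0, 1],
    ![0, 0, 1, 0, 0, 0, 0, 1, 0, 0, 1, 1, -2, 0, 0, 1, 0, 0, 1, 0],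
    ![0, 0, 0, 1, 1, 0, 0, 0, 1, 0, 1, 0, 0, -2, 1, 1, 0, 1, 0, 1],
    ![1, 0, 0, 0, 0, 1, 0, 0, 0, 1, 0, 1, 0, 1, -2, 1, 0, 0, 1, 0],
    ![0, 1, 0, 0, 0, 0, 1, 0, 0, 0, 0, 0, 1, 1, 1, -2, 0, 0, 0, 0],
    ![0, 0, 0, 1, 0, 0, 1, 0, 1, 0, 1, 0, 0, 0, 0, 0, -2, 1, 1, 1],
    ![0, 0, 1, 0, 0, 1, 0, 1, 0, 0, 0, 1, 0, 1, 0, 0, 1, -2, 1, 0],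
    ![0, 1, 0, 0, 1, 0, 0, 0, 0, 0, 0, 0, 1, 0, 1, 0, 1, 1, -2, 0],
    ![1, 0, 0, 0, 0, 0, 0, 0, 0, 1, 0, 1, 0, 1, 0, 0, 1, 0, 0, -2]]

-- swaps: [(2, 3)]
-- detL=880602513408 detU=56358560858112
def L : Matrix (Fin 20) (Fin 20) ℤ :=
  Matrix.of ![![1, 0, 0, 0, 0, 0, 0, 0, 0, 0, 0, 0, 0, 0, 0, 0, 0, 0, 0, 0],
  ![1, 2, 0, 0, 0, 0, 0, 0, 0, 0, 0, 0, 0, 0, 0, 0, 0, 0, 0, 0],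
  ![1, 1, 1, 0, 0, 0, 0, 0, 0, 0, 0, 0, 0, 0, 0, 0, 0, 0, 0, 0],
  ![1, 1, 0, 1, 0, 0, 0, 0, 0, 0, 0, 0, 0, 0, 0, 0, 0, 0, 0, 0],
  ![0, -1, -1, -1, 3, 0, 0, 0, 0, 0, 0, 0, 0, 0, 0, 0, 0, 0, 0, 0],
  ![-3, -1, -4, -4, 3, 9, 0, 0, 0, 0, 0, 0, 0, 0, 0, 0, 0, 0, 0, 0],
  ![-3, -3, -4, -2, 3, 3, 6, 0, 0, 0, 0, 0, 0, 0, 0, 0, 0, 0, 0, 0],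
  ![0, -1, -1, -1, 1, 0, 0, 2, 0, 0, 0, 0, 0, 0, 0, 0, 0, 0, 0, 0],
  ![-3, -1, -4, -4, 1, 3, 0, 2, 6, 0, 0, 0, 0, 0, 0, 0, 0, 0, 0, 0],
  ![-3, -3, -4, -2, 1, 1, 2, 2, 2, 4, 0, 0, 0, 0, 0, 0, 0, 0, 0, 0],
  ![-2, -3, -4, -3, 1, 2, 1, 1, 1, 2, 4, 0, 0, 0, 0, 0, 0, 0, 0, 0],
  ![-5, 0, -4, -3, -2, 2, 4, -5, -2, -1, 4, 12, 0, 0, 0, 0, 0, 0, 0, 0],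
  ![-3, -4, -4, -1, -2, -2, 0, 1, -2, 1, 4, 4, 8, 0, 0, 0, 0, 0, 0, 0],
  ![-1, -2, 0, -5, 4, 2, -2, 1, 4, -1, 0, -4, -4, 8, 0, 0, 0, 0, 0, 0],
  ![-15, -18, -24, -23, 8, 14, 6, 3, 8, 9, 8, 4, -4, 8, 16, 0, 0, 0, 0, 0],
  ![-6, -3, -6, -5, -1, 2, 3, -3, -1, 0, 2, 4, 2, 2, 4, 6, 0, 0, 0, 0],
  ![0, 0, 1, 0, 0, 0, 0, 0, 1, 0, 0, -1, -1, 0, -1, -1, 2, 0, 0, 0],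
  ![-6, -6, -7, -6, 2, 4, 2, 2, 3, 2, 2, 1, -1, 2, 1, -1, 2, 4, 0, 0],
  ![-9, -6, -10, -9, 2, 4, 2, -1, 0, -1, 2, 4, 2, 2, 4, 2, 2, 4, 6, 0],
  ![-1, -4, -2, -3, 0, 0, 0, 1, 2, 3, 2, 0, -2, 2, 0, -2, 2, 0, -2, 4]]

def U : Matrix (Fin 20) (Fin 20) ℤ :=
  Matrix.of ![![-2, 1, 1, 1, 1, 0, 0, 1, 0, 0, 1, 0, 0, 0, 1, 0, 0, 0, 0, 1],
  ![0, -3, 3, 3, 1, 2, 0, 1, 2, 0, 1, 2, 0, 0, 1, 2, 0, 0, 2, 1],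
  ![0, 0, 3, 0, 1, 1, 0, 1, 1, 0, 1, 1, 0, 1, 1, 1, 1, 0, 1, 1],
  ![0, 0, 0, 3, 1, 1, 1, 1, 1, 1, 1, 1, 1, 0, 1, 1, 0, 1, 1, 1],
  ![0, 0, 0, 0, -6, 2, 2, 3, -1, -1, 0, -1, -1, 2, 0, -1, -1, -1, 2, 0],
  ![0, 0, 0, 0, 0, -16, 8, 0, 8, -4, 6, -1, -4, -1, 6, -1, -4, 5, 2, -3],
  ![0, 0, 0, 0, 0, 0, -8, 0, 0, 4, 0, 3, -2, -1, 0, 3, 2, 1, 0, -3],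
  ![0, 0, 0, 0, 0, 0, 0, -3, 1, 1, 0, -1, 1, 0, 0, -1, -1, 1, 0, 0],
  ![0, 0, 0, 0, 0, 0, 0, 0, -8, 4, 0, -1, -2, 3, 0, -1, 2, 1, 0, -3],
  ![0, 0, 0, 0, 0, 0, 0, 0, 0, -4, 2, -1, 0, -1, 2, -1, 0, 1, -2, 1],
  ![0, 0, 0, 0, 0, 0, 0, 0, 0, 0, -6, 2, 2, 2, 2, -2, 2, 0, -2, 0],
  ![0, 0, 0, 0, 0, 0, 0, 0, 0, 0, 0, -16, 8, -4, 8, 4, 2, 6, -2, 6],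
  ![0, 0, 0, 0, 0, 0, 0, 0, 0, 0, 0, 0, -8, -4, 0, 4, -2, 2, 2, 2],
  ![0, 0, 0, 0, 0, 0, 0, 0, 0, 0, 0, 0, 0, -8, 4, 0, 2, 2, -2, 2],
  ![0, 0, 0, 0, 0, 0, 0, 0, 0, 0, 0, 0, 0, 0, -12, 8, -2, 6, 2, 6],
  ![0, 0, 0, 0, 0, 0, 0, 0, 0, 0, 0, 0, 0, 0, 0, -4, -2, 0, 2, 0],
  ![0, 0, 0, 0, 0, 0, 0, 0, 0, 0, 0, 0, 0, 0, 0, 0, -2, 1, 0, 1],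
  ![0, 0, 0, 0, 0, 0, 0, 0, 0, 0, 0, 0, 0, 0, 0, 0, 0, -3, 2, 1],
  ![0, 0, 0, 0, 0, 0, 0, 0, 0, 0, 0, 0, 0, 0, 0, 0, 0, 0, -4, -2],
  ![0, 0, 0, 0, 0, 0, 0, 0, 0, 0, 0, 0, 0, 0, 0, 0, 0, 0, 0, -2]]


def sg : Equiv.Perm (Fin 20) := Equiv.swap 2 3

def PG : Matrix (Fin 20) (Fin 20) ℤ := G.submatrix sg id

set_option maxHeartbeats 4000000 in
lemma hLU : L * PG = U := by decide

lemma hLtri : L.BlockTriangular (OrderDual.toDual : Fin 20 → (Fin 20)ᵒᵈ) := by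
  intro i j h
  have h' : i < j := h
  revert h'
  clear h
  revert i j
  simp only [Fin.forall_iff]
  decide

lemma hUtri : U.BlockTriangular (id : Fin 20 → Fin 20) := by
  intro i j h
  have h' : j < i := h
  revert h'
  clear h
  revert i j
  simp only [Fin.forall_iff]
  decide

lemma hLdet : L.det = 880602513408 := by
  rw [Matrix.det_of_lowerTriangular L hLtri]
  decide

lemma hUdet : U.det = 56358560858112 := by
  rw [Matrix.det_of_upperTriangular hUtri]
  decide

lemma hsign : Equiv.Perm.sign sg = -1 :=
  Equiv.Perm.sign_swap (by decide)

lemma hPG : PG.det = -G.det := by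
  have h := Matrix.det_permute sg G
  rw [hsign] at h
  rw [show PG = G.submatrix sg id from rfl, h]
  push_cast
  ring

theorem G_det : G.det = -64 := by
  have h : L.det * PG.det = U.det :=
    (Matrix.det_mul L PG).symm.trans (congrArg Matrix.det hLU)
  rw [hLdet, hUdet, hPG] at h
  linarith
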